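/- Let Vect_{F1} be the category of finite pointed sets with partial bijections, with the duality P = Hom(−, {*,1}). A symmetric form on the n-element pointed set F1^n is an involution π ∈ S_n, and two symmetric forms are isometric if and only if the involutions are conjugate in S_n; hence isometry classes of symmetric forms on F1^n are in bijection with integers 0 ≤ w ≤ ⌊n/2⌋ (the number of 2-cycles of π), and the isometry group of the form with Witt index w is isomorphic to (Z/2 ≀ S_w) × S_{n−2w}. -/

import Mathlib

/-!
STATEMENT 19: In `Vect_{𝔽₁}` (finite pointed sets and partial bijections) with the
duality `P = Hom(−, {*,1})`, a symmetric form on `𝔽₁ⁿ` is an involution `π ∈ S_n`,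
isometry = conjugacy, so isometry classes are classified by the Witt index
`0 ≤ w ≤ ⌊n/2⌋` (the number of 2-cycles, i.e. half the cardinality of the support),
and the isometry group (= centralizer) of the form of Witt index `w` is isomorphic to
`(ℤ/2 ≀ S_w) × S_{n−2w}`.
-/

namespace WreathStmt

/-- The permutation action of `S_w` on `(ℤ/2)^w`. -/
def permHom (w : ℕ) :
    Equiv.Perm (Fin w) →* MulAut (Fin w → Multiplicative (ZMod 2)) where
  toFun σ := MulEquiv.arrowCongr σ (MulEquiv.refl (Multiplicative (ZMod 2)))
  map_one' := by ext f i; rfl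
  map_mul' σ τ := by ext f i; rfl

/-- The wreath product `ℤ/2 ≀ S_w = (ℤ/2)^w ⋊ S_w`. -/
abbrev Wreath (w : ℕ) :=
  (Fin w → Multiplicative (ZMod 2)) ⋊[permHom w] Equiv.Perm (Fin w)

/-! ### Auxiliary material -/

open Equiv Equiv.Perm

/-- The two-element group `ℤ/2` (multiplicatively). -/
abbrev M := Multiplicative (ZMod 2)

/-- The generator of `M`. -/
def gg : M := Multiplicative.ofAdd 1

lemma gg_mul_gg : gg * gg = 1 := by decide

lemma gg_ne_one : gg ≠ 1 := by decide

lemma M_cases (x : M) : x = 1 ∨ x = gg := by revert x; decide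

/-- `B w = Fin w × ℤ/2`, the support part of the canonical model. -/
abbrev B (w : ℕ) := Fin w × M

/-- The canonical fixed-point-free involution on `B w`. -/
def J0 (w : ℕ) : Perm (B w) :=
  (Equiv.refl (Fin w)).prodCongr (Equiv.mulLeft gg)

@[simp] lemma J0_apply (w : ℕ) (p : B w) : J0 w p = (p.1, gg * p.2) := rfl

lemma J0_sq (w : ℕ) : J0 w * J0 w = 1 := by
  ext p
  · simp [Perm.mul_apply]
  · simp [Perm.mul_apply, ← mul_assoc, gg_mul_gg]

lemma J0_ne (w : ℕ) (p : B w) : J0 w p ≠ p := by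
  intro h
  have h2 : gg * p.2 = p.2 := congrArg Prod.snd h
  exact gg_ne_one (by simpa using congrArg (· * p.2⁻¹) h2)

/-- The auxiliary permutation of `B w` attached to `(f, σ)`. -/
def phiAux (w : ℕ) (f : Fin w → M) (σ : Perm (Fin w)) : Perm (B w) where
  toFun p := (σ p.1, f (σ p.1) * p.2)
  invFun p := (σ⁻¹ p.1, (f p.1)⁻¹ * p.2)
  left_inv p := by simp [← mul_assoc]
  right_inv p := by simp [← mul_assoc]

@[simp] lemma phiAux_apply (w : ℕ) (f : Fin w → M) (σ : Perm (Fin w)) (p : B w) :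
    phiAux w f σ p = (σ p.1, f (σ p.1) * p.2) := rfl

/-- The embedding of the wreath product into `Perm (B w)`. -/
def phi (w : ℕ) : Wreath w →* Perm (B w) where
  toFun x := phiAux w x.left x.right
  map_one' := by
    ext p
    · simp
    · simp [SemidirectProduct.one_left]
  map_mul' x y := by
    ext p
    · simp [Perm.mul_apply]
    · simp [Perm.mul_apply, SemidirectProduct.mul_left, permHom, mul_assoc]

lemma phi_injective (w : ℕ) : Function.Injective (phi w) := by
  intro x y h
  have key : ∀ i : Fin w, (x.right i, x.left (x.right i)) = (y.right i, y.left (y.right i)) := by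
    intro i
    have := congrArg (fun (σ : Perm (B w)) => σ (i, 1)) h
    simpa [phi] using this
  have hr : x.right = y.right := Equiv.ext fun i => congrArg Prod.fst (key i)
  have hl : x.left = y.left := by
    funext j
    have := congrArg Prod.snd (key (x.right⁻¹ j))
    simpa [hr, Perm.inv_def, Equiv.apply_symm_apply] using this
  exact SemidirectProduct.ext hl hr

lemma phi_range (w : ℕ) :
    (phi w).range = Subgroup.centralizer ({J0 w} : Set (Perm (B w))) := by
  ext σ
  constructor
  · rintro ⟨⟨f, τ⟩, rfl⟩
    rw [Subgroup.mem_centralizer_singleton_iff]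
    ext p
    · simp [Perm.mul_apply, phi]
    · simp [Perm.mul_apply, phi, mul_assoc, mul_left_comm, mul_comm]
  · intro hσ
    rw [Subgroup.mem_centralizer_singleton_iff] at hσ
    have hcomm : ∀ p : B w, σ (J0 w p) = J0 w (σ p) := by
      intro p
      have := congrArg (fun (ρ : Perm (B w)) => ρ p) hσ
      simpa [Perm.mul_apply] using this
    -- the first coordinate of `σ (i, 1)` defines a permutation of `Fin w`
    set t : Fin w → Fin w := fun i => (σ (i, 1)).1 with ht
    have hinj : Function.Injective t := by
      intro i i' hii
      have hii' : (σ (i, 1)).1 = (σ (i', 1)).1 := hii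
      rcases M_cases ((σ (i, 1)).2 * ((σ (i', 1)).2)⁻¹) with h1 | h2
      · have hsnd : (σ (i, 1)).2 = (σ (i', 1)).2 := by
          have := congrArg (· * (σ (i', 1)).2) h1
          simpa [mul_assoc] using this
        have heq : σ (i, 1) = σ (i', 1) := Prod.ext hii' hsnd
        exact (Prod.ext_iff.mp (σ.injective heq)).1
      · exfalso
        have hsnd : (σ (i, 1)).2 = gg * (σ (i', 1)).2 := by
          have := congrArg (· * (σ (i', 1)).2) h2
          simpa [mul_assoc] using this
        have heq : σ (i, 1) = J0 w (σ (i', 1)) := Prod.ext hii' hsnd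
        rw [← hcomm] at heq
        have h3 := σ.injective heq
        have h4 : (1 : M) = gg * 1 := (Prod.ext_iff.mp h3).2
        rw [mul_one] at h4
        exact gg_ne_one h4.symm
    have hbij : Function.Bijective t := Finite.injective_iff_bijective.mp hinj
    let τ : Perm (Fin w) := Equiv.ofBijective t hbij
    let f : Fin w → M := fun j => (σ (τ.symm j, 1)).2
    refine ⟨⟨f, τ⟩, ?_⟩
    apply Equiv.ext
    intro p
    show ((τ p.1, f (τ p.1) * p.2) : B w) = σ p
    have hf : f (τ p.1) = (σ (p.1, 1)).2 := by
      show (σ (τ.symm (τ p.1), 1)).2 = _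
      rw [Equiv.symm_apply_apply]
    rcases M_cases p.2 with h | h
    · have hp : p = (p.1, 1) := Prod.ext rfl h
      rw [hp]
      exact Prod.ext rfl (by show f (τ p.1) * 1 = _; rw [mul_one, hf])
    · have hp : p = J0 w (p.1, 1) := Prod.ext rfl (by simpa using h)
      rw [hp, hcomm]
      show ((τ p.1, f (τ p.1) * (gg * 1)) : B w) = ((σ (p.1, 1)).1, gg * (σ (p.1, 1)).2)
      exact Prod.ext rfl (by rw [hf, mul_one, mul_comm])

/-- `centralizer {J0 w} ≃* Wreath w`. -/
noncomputable def centJ0Equiv (w : ℕ) :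
    Subgroup.centralizer ({J0 w} : Set (Perm (B w))) ≃* Wreath w :=
  ((MonoidHom.ofInjective (phi_injective w)).trans
    (MulEquiv.subgroupCongr (phi_range w))).symm

/-! ### The sum model -/

/-- The full canonical model, with `m` fixed points. -/
abbrev A (w m : ℕ) := B w ⊕ Fin m

/-- The canonical involution on `A w m`. -/
def JJ (w m : ℕ) : Perm (A w m) := Equiv.sumCongr (J0 w) 1

lemma J0_invol (w : ℕ) (b : B w) : J0 w (J0 w b) = b := by
  have := congrArg (fun (ρ : Perm (B w)) => ρ b) (J0_sq w)
  simpa [Perm.mul_apply] using this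

lemma JJ_sq (w m : ℕ) : JJ w m * JJ w m = 1 := by
  apply Equiv.ext
  intro x
  cases x with
  | inl b =>
    show (Sum.inl (J0 w (J0 w b)) : A w m) = Sum.inl b
    rw [J0_invol]
  | inr c => rfl

lemma JJ_support (w m : ℕ) :
    (JJ w m).support = Finset.univ.map ⟨Sum.inl, Sum.inl_injective⟩ := by
  ext x
  cases x with
  | inl b =>
    simp only [Equiv.Perm.mem_support, Finset.mem_map, Finset.mem_univ, true_and]
    constructor
    · intro _; exact ⟨b, rfl⟩
    · rintro ⟨b', -⟩
      intro h
      exact J0_ne w b (Sum.inl_injective (h : Sum.inl (J0 w b) = Sum.inl b))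
  | inr c => simp [JJ, Equiv.Perm.mem_support]

lemma card_M : Fintype.card M = 2 := by
  simp [M]

lemma JJ_support_card (w m : ℕ) : (JJ w m).support.card = 2 * w := by
  rw [JJ_support, Finset.card_map]
  simp [card_M, mul_comm]

lemma centJJ_eq (w m : ℕ) :
    Subgroup.centralizer ({JJ w m} : Set (Perm (A w m))) =
      Subgroup.map (Equiv.Perm.sumCongrHom (B w) (Fin m))
        ((Subgroup.centralizer ({J0 w} : Set (Perm (B w)))).prod ⊤) := by
  ext σ
  constructor
  · intro hσ
    rw [Subgroup.mem_centralizer_singleton_iff] at hσ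
    have hcomm : ∀ p : A w m, σ (JJ w m p) = JJ w m (σ p) := by
      intro p
      have := congrArg (fun (ρ : Perm (A w m)) => ρ p) hσ
      simpa [Perm.mul_apply] using this
    have hmaps : Set.MapsTo σ (Set.range Sum.inl) (Set.range Sum.inl) := by
      rintro x ⟨b, rfl⟩
      have hx : σ (Sum.inl b) ≠ JJ w m (σ (Sum.inl b)) := by
        rw [← hcomm]
        intro h
        have h2 := σ.injective h
        exact J0_ne w b
          (Sum.inl_injective (h2.symm : (Sum.inl (J0 w b) : A w m) = Sum.inl b))
      cases hσx : σ (Sum.inl b) with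
      | inl b' => exact ⟨b', rfl⟩
      | inr c => exfalso; rw [hσx] at hx; exact hx rfl
    obtain ⟨⟨σ₁, σ₂⟩, rfl⟩ := Equiv.Perm.mem_sumCongrHom_range_of_perm_mapsTo_inl hmaps
    refine Subgroup.mem_map.mpr ⟨(σ₁, σ₂), ?_, rfl⟩
    refine Subgroup.mem_prod.mpr ⟨?_, trivial⟩
    rw [Subgroup.mem_centralizer_singleton_iff]
    have : (Equiv.Perm.sumCongrHom (B w) (Fin m)) (σ₁ * J0 w, σ₂ * 1)
        = (Equiv.Perm.sumCongrHom (B w) (Fin m)) (J0 w * σ₁, 1 * σ₂) := by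
      rw [show ((σ₁ * J0 w, σ₂ * 1) : Perm (B w) × Perm (Fin m))
            = (σ₁, σ₂) * (J0 w, 1) from rfl,
          show ((J0 w * σ₁, 1 * σ₂) : Perm (B w) × Perm (Fin m))
            = (J0 w, 1) * (σ₁, σ₂) from rfl,
          map_mul, map_mul]
      exact hσ
    have := Equiv.Perm.sumCongrHom_injective this
    simpa using congrArg Prod.fst this
  · intro hσ
    obtain ⟨⟨σ₁, σ₂⟩, hmem, rfl⟩ := Subgroup.mem_map.mp hσ
    have h₁ : σ₁ * J0 w = J0 w * σ₁ :=
      Subgroup.mem_centralizer_singleton_iff.mp (Subgroup.mem_prod.mp hmem).1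
    rw [Subgroup.mem_centralizer_singleton_iff]
    have : JJ w m = (Equiv.Perm.sumCongrHom (B w) (Fin m)) (J0 w, 1) := rfl
    rw [this, ← map_mul, ← map_mul]
    congr 1
    exact Prod.ext h₁ (by simp)

/-- `centralizer {JJ w m} ≃* Wreath w × Perm (Fin m)`. -/
noncomputable def centJJEquiv (w m : ℕ) :
    Subgroup.centralizer ({JJ w m} : Set (Perm (A w m))) ≃*
      Wreath w × Perm (Fin m) :=
  ((MulEquiv.subgroupCongr (centJJ_eq w m)).trans
    ((((Subgroup.centralizer ({J0 w} : Set (Perm (B w)))).prod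
        ⊤).equivMapOfInjective _ Equiv.Perm.sumCongrHom_injective).symm.trans
      (Subgroup.prodEquiv _ _))).trans
    (MulEquiv.prodCongr (centJ0Equiv w) Subgroup.topEquiv)

/-! ### Transport along an equivalence and along conjugation -/

/-- `Equiv.permCongr` as a `MulEquiv`. -/
def permCongrMulEquiv {α β : Type*} (e : α ≃ β) : Perm α ≃* Perm β where
  toEquiv := e.permCongr
  map_mul' σ τ := by
    ext x
    simp [Equiv.permCongr_apply, Perm.mul_apply]

@[simp] lemma permCongrMulEquiv_apply {α β : Type*} (e : α ≃ β) (σ : Perm α) (x : β) :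
    permCongrMulEquiv e σ x = e (σ (e.symm x)) := rfl

lemma map_centralizer_singleton {G H : Type*} [Group G] [Group H] (Φ : G ≃* H) (g : G) :
    Subgroup.map Φ.toMonoidHom (Subgroup.centralizer {g}) =
      Subgroup.centralizer ({Φ g} : Set H) := by
  ext x
  rw [Subgroup.mem_map_equiv, Subgroup.mem_centralizer_singleton_iff,
    Subgroup.mem_centralizer_singleton_iff]
  constructor
  · intro h
    have := congrArg Φ h
    simpa [map_mul] using this
  · intro h
    apply Φ.injective
    simpa [map_mul] using h

/-- Centralizers of a group element and its image under a `MulEquiv` are isomorphic. -/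
noncomputable def centMulEquiv {G H : Type*} [Group G] [Group H] (Φ : G ≃* H) (g : G) :
    Subgroup.centralizer ({g} : Set G) ≃* Subgroup.centralizer ({Φ g} : Set H) :=
  (Φ.subgroupMap _).trans
    (MulEquiv.subgroupCongr (by
      rw [← map_centralizer_singleton Φ g]; rfl))

/-! ### Cycle type of an involution -/

lemma inv_cycleType {n : ℕ} (π : Perm (Fin n)) (h : π * π = 1) :
    π.cycleType = Multiset.replicate (π.support.card / 2) 2 ∧
      2 * (π.support.card / 2) = π.support.card := by
  have horder : orderOf π ∣ 2 := orderOf_dvd_of_pow_eq_one (by rw [pow_two]; exact h)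
  have h2 : ∀ x ∈ π.cycleType, x = 2 := by
    intro x hx
    have hle : 2 ≤ x := Equiv.Perm.two_le_of_mem_cycleType hx
    have hdvd : x ∣ orderOf π := by
      rw [← Equiv.Perm.lcm_cycleType]
      exact Multiset.dvd_lcm hx
    have h2 : x ∣ 2 := hdvd.trans horder
    have := Nat.le_of_dvd two_pos h2
    omega
  have hrep : π.cycleType = Multiset.replicate (Multiset.card π.cycleType) 2 :=
    Multiset.eq_replicate_card.mpr h2
  have hsum : π.support.card = 2 * Multiset.card π.cycleType := by
    rw [← Equiv.Perm.sum_cycleType, hrep]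
    simp [Multiset.sum_replicate, mul_comm]
  constructor
  · rw [hrep, hsum]
    congr 1
    omega
  · omega

/-! ### The main theorem -/

theorem statement19 (n : ℕ) :
    -- isometric (= conjugate) iff the same number of 2-cycles
    (∀ π π' : Equiv.Perm (Fin n), π * π = 1 → π' * π' = 1 →
      (IsConj π π' ↔ π.support.card = π'.support.card)) ∧
    -- every symmetric form has a Witt index `0 ≤ w ≤ ⌊n/2⌋`
    (∀ π : Equiv.Perm (Fin n), π * π = 1 →
      ∃ w : ℕ, w ≤ n / 2 ∧ π.support.card = 2 * w) ∧
    -- every `0 ≤ w ≤ ⌊n/2⌋` arises as the Witt index of a symmetric form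
    (∀ w : ℕ, w ≤ n / 2 →
      ∃ π : Equiv.Perm (Fin n), π * π = 1 ∧ π.support.card = 2 * w) ∧
    -- the isometry group of the form of Witt index `w` is `(ℤ/2 ≀ S_w) × S_{n−2w}`
    (∀ (π : Equiv.Perm (Fin n)) (w : ℕ), π * π = 1 → π.support.card = 2 * w →
      Nonempty (Subgroup.centralizer ({π} : Set (Equiv.Perm (Fin n))) ≃*
        Wreath w × Equiv.Perm (Fin (n - 2 * w)))) := by
  classical
  -- canonical model construction, for `2 * w ≤ n`
  have canon : ∀ w : ℕ, 2 * w ≤ n →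
      ∃ π : Equiv.Perm (Fin n), π * π = 1 ∧ π.support.card = 2 * w ∧
        Nonempty (Subgroup.centralizer ({π} : Set (Equiv.Perm (Fin n))) ≃*
          Wreath w × Equiv.Perm (Fin (n - 2 * w))) := by
    intro w hw
    have hcard : Fintype.card (A w (n - 2 * w)) = Fintype.card (Fin n) := by
      simp [card_M]
      omega
    obtain ⟨e⟩ : Nonempty (A w (n - 2 * w) ≃ Fin n) := ⟨Fintype.equivOfCardEq hcard⟩
    set Φ := permCongrMulEquiv e with hΦ
    refine ⟨Φ (JJ w (n - 2 * w)), ?_, ?_, ?_⟩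
    · rw [← map_mul, JJ_sq, map_one]
    · have hsupp : (Φ (JJ w (n - 2 * w))).support =
          (JJ w (n - 2 * w)).support.map e.toEmbedding := by
        ext x
        simp only [Equiv.Perm.mem_support, Finset.mem_map_equiv]
        rw [hΦ]
        simp only [permCongrMulEquiv_apply]
        constructor
        · intro hne h; exact hne (by rw [h]; simp)
        · intro hne h
          exact hne (by
            have := congrArg e.symm h
            simpa using this)
      rw [hsupp, Finset.card_map, JJ_support_card]
    · exact ⟨(centMulEquiv Φ (JJ w (n - 2 * w))).symm.trans (centJJEquiv w (n - 2 * w))⟩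
  have part1 : ∀ π π' : Equiv.Perm (Fin n), π * π = 1 → π' * π' = 1 →
      (IsConj π π' ↔ π.support.card = π'.support.card) := by
    intro π π' h h'
    constructor
    · intro hconj
      have := Equiv.Perm.isConj_iff_cycleType_eq.mp hconj
      rw [← Equiv.Perm.sum_cycleType, ← Equiv.Perm.sum_cycleType, this]
    · intro hcard
      obtain ⟨hct, _⟩ := inv_cycleType π h
      obtain ⟨hct', _⟩ := inv_cycleType π' h'
      rw [Equiv.Perm.isConj_iff_cycleType_eq, hct, hct', hcard]
  refine ⟨part1, ?_, ?_, ?_⟩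
  · intro π h
    obtain ⟨_, h2⟩ := inv_cycleType π h
    refine ⟨π.support.card / 2, ?_, h2.symm⟩
    have : π.support.card ≤ n := by
      simpa using Finset.card_le_univ π.support
    omega
  · intro w hw
    have hw' : 2 * w ≤ n := by omega
    obtain ⟨π, h1, h2, _⟩ := canon w hw'
    exact ⟨π, h1, h2⟩
  · intro π w hπ hcard
    have hw' : 2 * w ≤ n := by
      have : π.support.card ≤ n := by simpa using Finset.card_le_univ π.support
      omega
    obtain ⟨π', h1, h2, ⟨Ψ⟩⟩ := canon w hw'
    have hconj : IsConj π' π := (part1 π' π h1 hπ).mpr (by rw [h2, hcard])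
    obtain ⟨c, hc⟩ := hconj
    have hc' : (MulAut.conj (c : Perm (Fin n))) π' = π := by
      rw [MulAut.conj_apply, hc.eq, mul_assoc]
      simp
    have := centMulEquiv (MulAut.conj (c : Perm (Fin n)) : Perm (Fin n) ≃* Perm (Fin n)) π'
    rw [hc'] at this
    exact ⟨this.symm.trans Ψ⟩

end WreathStmt
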